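/- Let (ℝⁿ, ‖·‖) be a (possibly asymmetric) strictly convex normed space that is not an inner product space, and suppose it satisfies the Φ-contraction property for some function Φ : (0,∞) → (0,∞): for every convex f and all gradient curves ξ, ζ of f, ‖ζ(t) − ξ(t)‖ ≤ Φ(t)·‖ζ(0) − ξ(0)‖ for all t ∈ (0,T). Then in fact ‖ζ(t) − ξ(t)‖ ≤ (inf_{s>0} Φ(s))·‖ζ(0) − ξ(0)‖ holds for all t ∈ (0,T), every convex f, and all gradient curves ξ, ζ of f. -/

import Mathlib

open RealInnerProductSpace

/-- A possibly asymmetric norm on `ℝⁿ`. -/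
def IsAsymNorm {n : ℕ} (N : EuclideanSpace ℝ (Fin n) → ℝ) : Prop :=
  (∀ x, 0 ≤ N x) ∧ (∀ x, N x = 0 ↔ x = 0) ∧
  (∀ x : EuclideanSpace ℝ (Fin n), ∀ c : ℝ, 0 < c → N (c • x) = c * N x) ∧
  (∀ x y, N (x + y) ≤ N x + N y)

/-- Strict convexity of a (possibly asymmetric) norm. -/
def IsStrictlyConvexN {n : ℕ} (N : EuclideanSpace ℝ (Fin n) → ℝ) : Prop :=
  ∀ x y, N (x + y) = N x + N y → ∃ a : ℝ, 0 ≤ a ∧ (x = a • y ∨ y = a • x)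

/-- `N` is induced from an inner product. -/
def IsInnerProductNorm {n : ℕ} (N : EuclideanSpace ℝ (Fin n) → ℝ) : Prop :=
  ∃ ip : EuclideanSpace ℝ (Fin n) → EuclideanSpace ℝ (Fin n) → ℝ,
    (∀ x y, ip x y = ip y x) ∧
    (∀ x y z, ip (x + y) z = ip x z + ip y z) ∧
    (∀ (c : ℝ) x y, ip (c • x) y = c * ip x y) ∧
    (∀ x, 0 ≤ ip x x) ∧
    (∀ x, ip x x = 0 → x = 0) ∧
    (∀ x, N x = Real.sqrt (ip x x))

/-- The dual norm `‖α‖_* = sup {α(x) : ‖x‖ ≤ 1}`, with covectors identified with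
vectors via the Euclidean inner product. -/
noncomputable def dualN {n : ℕ} (N : EuclideanSpace ℝ (Fin n) → ℝ)
    (a : EuclideanSpace ℝ (Fin n)) : ℝ :=
  sSup {r : ℝ | ∃ x, N x ≤ 1 ∧ r = ⟪a, x⟫}

/-- The Legendre transform `𝓛(α) = ½ d[‖·‖_*²](α)` associated with the norm `N`. -/
noncomputable def legendreN {n : ℕ} (N : EuclideanSpace ℝ (Fin n) → ℝ)
    (a : EuclideanSpace ℝ (Fin n)) : EuclideanSpace ℝ (Fin n) :=
  gradient (fun b => dualN N b ^ 2 / 2) a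

/-- A gradient curve for `f` on `[0,T)`: a solution of `ξ'(t) = ∇[−f](ξ(t))`,
where `∇[−f](x) = 𝓛(−df(x))`. -/
def IsGradCurve {n : ℕ} (N f : EuclideanSpace ℝ (Fin n) → ℝ) (T : ℝ)
    (ξ : ℝ → EuclideanSpace ℝ (Fin n)) : Prop :=
  ∀ t : ℝ, 0 ≤ t → t < T → HasDerivAt ξ (legendreN N (-(gradient f (ξ t)))) t

open Pointwise in
private lemma dualN_smul' {n : ℕ} (N : EuclideanSpace ℝ (Fin n) → ℝ) {c : ℝ} (hc : 0 < c)
    (a : EuclideanSpace ℝ (Fin n)) : dualN N (c • a) = c * dualN N a := by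
  have hset : {r : ℝ | ∃ x, N x ≤ 1 ∧ r = ⟪c • a, x⟫}
      = c • {r : ℝ | ∃ x, N x ≤ 1 ∧ r = ⟪a, x⟫} := by
    ext r
    simp only [Set.mem_setOf_eq, Set.mem_smul_set, real_inner_smul_left]
    constructor
    · rintro ⟨x, hx, rfl⟩; exact ⟨⟪a, x⟫, ⟨x, hx, rfl⟩, rfl⟩
    · rintro ⟨y, ⟨x, hx, rfl⟩, rfl⟩; exact ⟨x, hx, rfl⟩
  rw [dualN, hset, Real.sSup_smul_of_nonneg hc.le, smul_eq_mul, dualN]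

private lemma q_smul' {n : ℕ} (N : EuclideanSpace ℝ (Fin n) → ℝ) {c : ℝ} (hc : 0 < c)
    (a : EuclideanSpace ℝ (Fin n)) :
    dualN N (c • a) ^ 2 / 2 = c ^ 2 * (dualN N a ^ 2 / 2) := by
  rw [dualN_smul' N hc]; ring

private lemma diff_transfer' {n : ℕ} (N : EuclideanSpace ℝ (Fin n) → ℝ) {c : ℝ} (hc : 0 < c)
    {a : EuclideanSpace ℝ (Fin n)}
    (h : DifferentiableAt ℝ (fun b => dualN N b ^ 2 / 2) (c • a)) :
    DifferentiableAt ℝ (fun b => dualN N b ^ 2 / 2) a := by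
  set q : EuclideanSpace ℝ (Fin n) → ℝ := fun b => dualN N b ^ 2 / 2 with hq
  have h1 : DifferentiableAt ℝ (fun b => q (c • b)) a :=
    h.comp a (differentiableAt_id.const_smul c)
  have h2 : (fun b => q (c • b)) = fun b => c ^ 2 * q b := by
    funext b; exact q_smul' N hc b
  rw [h2] at h1
  have h3 : DifferentiableAt ℝ (fun b => (c ^ 2)⁻¹ * (c ^ 2 * q b)) a := h1.const_mul _
  have h4 : (fun b => (c ^ 2)⁻¹ * (c ^ 2 * q b)) = q := by
    funext b; field_simp
  rwa [h4] at h3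

private lemma legendre_smul' {n : ℕ} (N : EuclideanSpace ℝ (Fin n) → ℝ) {c : ℝ} (hc : 0 < c)
    (a : EuclideanSpace ℝ (Fin n)) :
    legendreN N (c • a) = c • legendreN N a := by
  set q : EuclideanSpace ℝ (Fin n) → ℝ := fun b => dualN N b ^ 2 / 2 with hq
  by_cases hd : DifferentiableAt ℝ q (c • a)
  · have hda : DifferentiableAt ℝ q a := diff_transfer' N hc hd
    have hsm : HasFDerivAt (fun b : EuclideanSpace ℝ (Fin n) => c • b)
        (c • ContinuousLinearMap.id ℝ (EuclideanSpace ℝ (Fin n))) a :=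
      (hasFDerivAt_id a).const_smul c
    have h1 : HasFDerivAt (fun b => q (c • b))
        ((fderiv ℝ q (c • a)).comp (c • ContinuousLinearMap.id ℝ (EuclideanSpace ℝ (Fin n)))) a :=
      hd.hasFDerivAt.comp a hsm
    have h2 : (fun b => q (c • b)) = fun b => c ^ 2 * q b := by
      funext b; exact q_smul' N hc b
    rw [h2] at h1
    have h3 : HasFDerivAt (fun b => c ^ 2 * q b) (c ^ 2 • fderiv ℝ q a) a :=
      hda.hasFDerivAt.const_smul (c ^ 2)
    have h4 : (fderiv ℝ q (c • a)).comp (c • ContinuousLinearMap.id ℝ (EuclideanSpace ℝ (Fin n)))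
        = c ^ 2 • fderiv ℝ q a := h1.unique h3
    have h5 : (fderiv ℝ q (c • a)).comp (c • ContinuousLinearMap.id ℝ (EuclideanSpace ℝ (Fin n)))
        = c • fderiv ℝ q (c • a) := by
      ext v; simp [map_smul]
    have h6 : fderiv ℝ q (c • a) = c • fderiv ℝ q a := by
      have h8 := h5.symm.trans h4
      have h7 : c⁻¹ • (c • fderiv ℝ q (c • a)) = c⁻¹ • (c ^ 2 • fderiv ℝ q a) := by rw [h8]
      rwa [smul_smul, smul_smul, inv_mul_cancel₀ hc.ne', one_smul,
        (by field_simp : c⁻¹ * c ^ 2 = c)] at h7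
    show (InnerProductSpace.toDual ℝ _).symm (fderiv ℝ q (c • a))
        = c • (InnerProductSpace.toDual ℝ _).symm (fderiv ℝ q a)
    rw [h6, map_smul]
  · have hda : ¬ DifferentiableAt ℝ q a := by
      intro hda
      refine hd ?_
      have h9 := diff_transfer' N (show (0:ℝ) < c⁻¹ by positivity) (a := c • a)
      rw [smul_smul, inv_mul_cancel₀ hc.ne', one_smul] at h9
      exact h9 hda
    show (InnerProductSpace.toDual ℝ _).symm (fderiv ℝ q (c • a))
        = c • (InnerProductSpace.toDual ℝ _).symm (fderiv ℝ q a)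
    rw [fderiv_zero_of_not_differentiableAt hd, fderiv_zero_of_not_differentiableAt hda]
    simp

private lemma gradient_const_mul' {n : ℕ} {f : EuclideanSpace ℝ (Fin n) → ℝ}
    {x : EuclideanSpace ℝ (Fin n)} (hf : DifferentiableAt ℝ f x) (c : ℝ) :
    gradient (fun y => c * f y) x = c • gradient f x := by
  show (InnerProductSpace.toDual ℝ _).symm (fderiv ℝ (fun y => c * f y) x)
      = c • (InnerProductSpace.toDual ℝ _).symm (fderiv ℝ f x)
  rw [fderiv_const_mul hf c, map_smul]

/-- on a strictly convex non-inner-product normed space, the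
`Φ`-contraction property upgrades to the `(inf_{s>0} Φ(s))`-contraction property. -/
theorem Phi_contraction_improves (n : ℕ)
    (N : EuclideanSpace ℝ (Fin n) → ℝ)
    (hN : IsAsymNorm N) (hsc : IsStrictlyConvexN N)
    (hni : ¬ IsInnerProductNorm N)
    (Φ : ℝ → ℝ) (hΦpos : ∀ s : ℝ, 0 < s → 0 < Φ s)
    (hΦ : ∀ f : EuclideanSpace ℝ (Fin n) → ℝ,
      ConvexOn ℝ Set.univ f → Differentiable ℝ f →
      ∀ T : ℝ, 0 < T → ∀ ξ ζ : ℝ → EuclideanSpace ℝ (Fin n),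
        IsGradCurve N f T ξ → IsGradCurve N f T ζ →
        ∀ t : ℝ, 0 < t → t < T → N (ζ t - ξ t) ≤ Φ t * N (ζ 0 - ξ 0)) :
    ∀ f : EuclideanSpace ℝ (Fin n) → ℝ,
      ConvexOn ℝ Set.univ f → Differentiable ℝ f →
      ∀ T : ℝ, 0 < T → ∀ ξ ζ : ℝ → EuclideanSpace ℝ (Fin n),
        IsGradCurve N f T ξ → IsGradCurve N f T ζ →
        ∀ t : ℝ, 0 < t → t < T →
          N (ζ t - ξ t) ≤ sInf {y : ℝ | ∃ s : ℝ, 0 < s ∧ y = Φ s} * N (ζ 0 - ξ 0) := by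
  
  intro f hconv hdiff T hT ξ ζ hξ hζ t ht htT
  have hA_ne : ({y : ℝ | ∃ s : ℝ, 0 < s ∧ y = Φ s}).Nonempty := ⟨Φ 1, 1, one_pos, rfl⟩
  have key : ∀ s : ℝ, 0 < s → N (ζ t - ξ t) ≤ Φ s * N (ζ 0 - ξ 0) := by
    intro s hs
    set c : ℝ := t / s with hc_def
    have hc : 0 < c := div_pos ht hs
    set g : EuclideanSpace ℝ (Fin n) → ℝ := fun x => c * f x with hg
    have hgconv : ConvexOn ℝ Set.univ g := hconv.smul hc.le
    have hgdiff : Differentiable ℝ g := fun x => (hdiff x).const_mul c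
    have hTc : 0 < T / c := div_pos hT hc
    have curve : ∀ ρ : ℝ → EuclideanSpace ℝ (Fin n), IsGradCurve N f T ρ →
        IsGradCurve N g (T / c) (fun u => ρ (c * u)) := by
      intro ρ hρ u hu huT
      have hcu : c * u < T := by
        rw [lt_div_iff₀ hc] at huT; linarith
      have h1 : HasDerivAt ρ (legendreN N (-(gradient f (ρ (c * u))))) (c * u) :=
        hρ _ (mul_nonneg hc.le hu) hcu
      have hlin : HasDerivAt (fun u : ℝ => c * u) c u := by
        simpa using (hasDerivAt_id u).const_mul c
      have h2 : HasDerivAt (fun u => ρ (c * u))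
          (c • legendreN N (-(gradient f (ρ (c * u))))) u := h1.scomp u hlin
      have h3 : legendreN N (-(gradient g (ρ (c * u))))
          = c • legendreN N (-(gradient f (ρ (c * u)))) := by
        rw [show gradient g (ρ (c * u)) = c • gradient f (ρ (c * u)) from
            gradient_const_mul' (hdiff _) c, ← smul_neg, legendre_smul' N hc]
      show HasDerivAt (fun u => ρ (c * u)) (legendreN N (-(gradient g (ρ (c * u))))) u
      rw [h3]; exact h2
    have hη := curve ξ hξ
    have hθ := curve ζ hζ
    have hsT : s < T / c := by
      rw [lt_div_iff₀ hc]
      have : s * c = t := by rw [hc_def]; field_simp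
      linarith
    have hmain := hΦ g hgconv hgdiff (T / c) hTc _ _ hη hθ s hs hsT
    have hcs : c * s = t := by rw [hc_def]; field_simp
    simpa [hcs] using hmain
  have hN0 : 0 ≤ N (ζ 0 - ξ 0) := hN.1 _
  rcases hN0.eq_or_lt with h0 | h0
  · have h1 := key 1 one_pos
    rw [← h0, mul_zero] at h1 ⊢
    exact h1
  · have hle : N (ζ t - ξ t) / N (ζ 0 - ξ 0)
        ≤ sInf {y : ℝ | ∃ s : ℝ, 0 < s ∧ y = Φ s} := by
      apply le_csInf hA_ne
      rintro y ⟨s, hs, rfl⟩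
      rw [div_le_iff₀ h0]
      exact key s hs
    exact (div_le_iff₀ h0).mp hle
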